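/- Let t* be a probability distribution with t*_i ≥ 1/M for all i in its support, and let t^vd be a variational-distance-optimal M-type approximation of t*, satisfying t^vd_i ≥ ⌊M t*_i⌋/M ≥ 1/M and |t*_i - t^vd_i| < 1/M for all i. Then D(t*‖t^vd) ≤ log(2)·‖t* - t^vd‖_1. -/

import Mathlib

open Finset

/-- Informational divergence D(p‖q) (real-valued, summed over the support of p). -/
noncomputable def Dr {n : ℕ} (p q : Fin n → ℝ) : ℝ :=
  ∑ i, if 0 < p i then p i * Real.log (p i / q i) else 0

private lemma hasDerivAux (a x : ℝ) (hx : x ≠ 0) :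
    HasDerivAt (fun y : ℝ => a * (y - 1) - y * Real.log y) (a - (Real.log x + 1)) x := by
  have h1 : HasDerivAt (fun y : ℝ => a * (y - 1)) a x := by
    simpa using (((hasDerivAt_id x).sub_const 1).const_mul a)
  have h2 : HasDerivAt (fun y : ℝ => y * Real.log y) (Real.log x + 1) x := by
    have := (hasDerivAt_id x).fun_mul (Real.hasDerivAt_log hx)
    simpa [mul_inv_cancel₀ hx, add_comm] using this
  exact h1.sub h2

private lemma contAux (a : ℝ) {s : Set ℝ} (hs : ∀ x ∈ s, x ≠ 0) :
    ContinuousOn (fun y : ℝ => a * (y - 1) - y * Real.log y) s := by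
  apply ContinuousOn.sub
  · fun_prop
  · exact continuousOn_id.mul (Real.continuousOn_log.mono hs)

private lemma aux1 (r : ℝ) (h1 : 1 ≤ r) (h2 : r ≤ 2) :
    r * Real.log r ≤ (1 + Real.log 2) * (r - 1) := by
  set f : ℝ → ℝ := fun y => (1 + Real.log 2) * (y - 1) - y * Real.log y with hf
  have hmono : MonotoneOn f (Set.Icc 1 2) := by
    apply monotoneOn_of_deriv_nonneg (convex_Icc 1 2)
    · exact contAux _ (fun x hx => by rw [Set.mem_Icc] at hx; linarith)
    · intro x hx
      rw [interior_Icc, Set.mem_Ioo] at hx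
      exact (hasDerivAux _ x (by linarith)).differentiableAt.differentiableWithinAt
    · intro x hx
      rw [interior_Icc, Set.mem_Ioo] at hx
      rw [(hasDerivAux _ x (by linarith)).deriv]
      have : Real.log x ≤ Real.log 2 := Real.log_le_log (by linarith) (le_of_lt hx.2)
      linarith
  have h0 : f 1 = 0 := by simp [hf]
  have := hmono (Set.mem_Icc.mpr ⟨le_refl 1, by norm_num⟩) (Set.mem_Icc.mpr ⟨h1, h2⟩) h1
  rw [h0] at this
  simpa [hf, sub_nonneg] using this

private lemma aux2 (r : ℝ) (h1 : 1/2 ≤ r) (h2 : r ≤ 1) :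
    r * Real.log r ≤ (1 - Real.log 2) * (r - 1) := by
  set f : ℝ → ℝ := fun y => (1 - Real.log 2) * (y - 1) - y * Real.log y with hf
  have hanti : AntitoneOn f (Set.Icc (1/2) 1) := by
    apply antitoneOn_of_deriv_nonpos (convex_Icc _ _)
    · exact contAux _ (fun x hx => by rw [Set.mem_Icc] at hx; linarith)
    · intro x hx
      rw [interior_Icc, Set.mem_Ioo] at hx
      exact (hasDerivAux _ x (by linarith)).differentiableAt.differentiableWithinAt
    · intro x hx
      rw [interior_Icc, Set.mem_Ioo] at hx
      rw [(hasDerivAux _ x (by linarith)).deriv]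
      have hlog : Real.log (1/2) ≤ Real.log x := Real.log_le_log (by norm_num) (le_of_lt hx.1)
      rw [show (1:ℝ)/2 = 2⁻¹ by norm_num, Real.log_inv] at hlog
      linarith
  have h0 : f 1 = 0 := by simp [hf]
  have := hanti (Set.mem_Icc.mpr ⟨h1, h2⟩) (Set.mem_Icc.mpr ⟨by norm_num, le_refl 1⟩) h2
  rw [h0] at this
  simpa [hf, sub_nonneg] using this

private lemma perterm (p q : ℝ) (hp : 0 < p) (hq : 0 < q)
    (h1 : p < 2 * q) (h2 : q < 2 * p) :
    p * Real.log (p / q) ≤ Real.log 2 * |p - q| + (p - q) := by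
  have hr : p * Real.log (p / q) = q * ((p/q) * Real.log (p/q)) := by
    field_simp
  rcases le_or_gt q p with hle | hlt
  · have hr1 : 1 ≤ p / q := (one_le_div hq).mpr hle
    have hr2 : p / q ≤ 2 := by rw [div_le_iff₀ hq]; linarith
    have := aux1 (p/q) hr1 hr2
    have hmul := mul_le_mul_of_nonneg_left this (le_of_lt hq)
    rw [← hr] at hmul
    have habs : |p - q| = p - q := abs_of_nonneg (by linarith)
    have heq : q * ((1 + Real.log 2) * (p / q - 1)) = (1 + Real.log 2) * (p - q) := by
      field_simp
    rw [heq] at hmul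
    rw [habs]; linarith
  · have hr1 : 1/2 ≤ p / q := by rw [le_div_iff₀ hq]; linarith
    have hr2 : p / q ≤ 1 := by rw [div_le_one hq]; linarith
    have := aux2 (p/q) hr1 hr2
    have hmul := mul_le_mul_of_nonneg_left this (le_of_lt hq)
    rw [← hr] at hmul
    have habs : |p - q| = -(p - q) := abs_of_nonpos (by linarith)
    have heq : q * ((1 - Real.log 2) * (p / q - 1)) = (1 - Real.log 2) * (p - q) := by
      field_simp
    rw [heq] at hmul
    rw [habs]; linarith

theorem divergence_le_log2_vd
    {n M : ℕ} (hn : 0 < n) (hM : 0 < M)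
    (tstar : Fin n → ℝ) (hts_nonneg : ∀ i, 0 ≤ tstar i)
    (hts_sum : ∑ i, tstar i = 1)
    (hts_min : ∀ i, 0 < tstar i → 1 / (M : ℝ) ≤ tstar i)
    (c : Fin n → ℕ) (hc : ∑ i, c i = M)
    (tvd : Fin n → ℝ) (htvd : ∀ i, tvd i = (c i : ℝ) / M)
    (hvdopt : ∀ c' : Fin n → ℕ, ∑ i, c' i = M →
      ∑ i, |tvd i - tstar i| ≤ ∑ i, |(c' i : ℝ) / M - tstar i|)
    (hfloor : ∀ i, (⌊(M : ℝ) * tstar i⌋ : ℝ) / M ≤ tvd i)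
    (hclose : ∀ i, |tstar i - tvd i| < 1 / (M : ℝ)) :
    Dr tstar tvd ≤ Real.log 2 * ∑ i, |tstar i - tvd i| := by
  have hMpos : (0:ℝ) < M := Nat.cast_pos.mpr hM
  have hsum_tvd : ∑ i, tvd i = 1 := by
    simp only [htvd]
    rw [← Finset.sum_div, ← Nat.cast_sum, hc]
    field_simp
  have key : ∀ i, (if 0 < tstar i then tstar i * Real.log (tstar i / tvd i) else 0)
      ≤ Real.log 2 * |tstar i - tvd i| + (tstar i - tvd i) := by
    intro i
    by_cases hpos : 0 < tstar i
    · rw [if_pos hpos]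
      have h1M : 1/(M:ℝ) ≤ tstar i := hts_min i hpos
      have htvdge : 1/(M:ℝ) ≤ tvd i := by
        have hfl : (1:ℝ) ≤ (⌊(M:ℝ) * tstar i⌋ : ℝ) := by
          have h1 : (1:ℝ) ≤ (M:ℝ) * tstar i := by
            rw [div_le_iff₀ hMpos] at h1M; linarith
          exact_mod_cast Int.le_floor.mpr (by exact_mod_cast h1)
        calc 1/(M:ℝ) ≤ (⌊(M:ℝ)*tstar i⌋ : ℝ)/M := by gcongr
          _ ≤ tvd i := hfloor i
      have hq : 0 < tvd i := lt_of_lt_of_le (by positivity) htvdge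
      have hd1 : tstar i - tvd i < 1/(M:ℝ) := lt_of_le_of_lt (le_abs_self _) (hclose i)
      have hd2 : tvd i - tstar i < 1/(M:ℝ) := by
        have := neg_abs_le (tstar i - tvd i)
        have h := hclose i; linarith [abs_sub_comm (tstar i) (tvd i) ▸ h,
          le_abs_self (tvd i - tstar i), (abs_sub_comm (tstar i) (tvd i))]
      have hlt1 : tstar i < 2 * tvd i := by linarith
      have hlt2 : tvd i < 2 * tstar i := by linarith
      exact perterm _ _ hpos hq hlt1 hlt2
    · push_neg at hpos
      have h0 : tstar i = 0 := le_antisymm hpos (hts_nonneg i)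
      have hc0 : c i = 0 := by
        by_contra h
        have h1 : (1:ℝ) ≤ (c i : ℝ) := by exact_mod_cast Nat.one_le_iff_ne_zero.mpr h
        have := hclose i
        rw [h0, htvd i] at this
        rw [zero_sub, abs_neg, abs_of_nonneg (by positivity)] at this
        have : (c i : ℝ)/M < 1/M := by linarith
        rw [div_lt_div_iff_of_pos_right] at this
        · linarith
        · exact hMpos
      have htvd0 : tvd i = 0 := by rw [htvd, hc0]; simp
      simp [h0, htvd0]
  calc Dr tstar tvd ≤ ∑ i, (Real.log 2 * |tstar i - tvd i| + (tstar i - tvd i)) :=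
        Finset.sum_le_sum (fun i _ => key i)
    _ = Real.log 2 * ∑ i, |tstar i - tvd i| + (∑ i, tstar i - ∑ i, tvd i) := by
        rw [Finset.sum_add_distrib, Finset.mul_sum, Finset.sum_sub_distrib]
    _ = Real.log 2 * ∑ i, |tstar i - tvd i| := by rw [hts_sum, hsum_tvd]; ring
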